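/- The A-semantics of S-CORE is weakly reversible: for every S-CORE term P and states σ, τ, ⟨P, σ⟩ ⇓ τ if and only if ⟨inv P, τ⟩ ⇓ σ. -/
import Mathlib


inductive Term where
  | skip : Term
  | inc : String → Term
  | dec : String → Term
  | push : String → Term
  | pop : String → Term
  | seq : Term → Term → Term
  | forLoop : String → Term → Term

def inv : Term → Term
  | .skip => .skip
  | .inc x => .dec x
  | .dec x => .inc x
  | .push x => .pop x
  | .pop x => .push x
  | .seq p q => .seq (inv q) (inv p)
  | .forLoop x p => .forLoop x (inv p)

abbrev AState := String → ℤ × List ℤ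

def upd (σ : AState) (x : String) (p : ℤ × List ℤ) : AState :=
  fun y => if y = x then p else σ y

mutual
/-- The big-step A-semantics (assert-based, partial) of S-CORE. -/
inductive ABig : Term → AState → AState → Prop where
  | skip (σ) : ABig .skip σ σ
  | inc (x σ) : ABig (.inc x) σ (upd σ x ((σ x).1 + 1, (σ x).2))
  | dec (x σ) : ABig (.dec x) σ (upd σ x ((σ x).1 - 1, (σ x).2))
  | push (x σ) : ABig (.push x) σ (upd σ x (0, (σ x).1 :: (σ x).2))
  | pop {x σ h t} : σ x = (0, h :: t) → ABig (.pop x) σ (upd σ x (h, t))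
  | seq {p q σ ν τ} : ABig p σ ν → ABig q ν τ → ABig (.seq p q) σ τ
  | forFwd {x p σ τ} : (σ x).1 ≥ 0 → AIter p (σ x).1.toNat σ τ →
      ABig (.forLoop x p) σ τ
  | forBwd {x p σ τ} : (σ x).1 < 0 → AIter (inv p) (-(σ x).1).toNat σ τ →
      ABig (.forLoop x p) σ τ

inductive AIter : Term → ℕ → AState → AState → Prop where
  | base (p σ) : AIter p 0 σ σ
  | step {p n σ ν τ} : ABig p σ ν → AIter p n ν τ → AIter p (n+1) σ τ
end

def occurs (x : String) : Term → Prop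
  | .skip => False
  | .inc y => x = y
  | .dec y => x = y
  | .push y => x = y
  | .pop y => x = y
  | .seq p q => occurs x p ∨ occurs x q
  | .forLoop y p => x = y ∨ occurs x p

/-- Well-formed terms: the leading variable of a `FOR` never occurs in its body. -/
def WF : Term → Prop
  | .seq p q => WF p ∧ WF q
  | .forLoop x p => ¬ occurs x p ∧ WF p
  | _ => True


theorem invInv (p : Term) : inv (inv p) = p := by
  induction p <;> simp [inv, *]

theorem occurs_inv (x : String) (p : Term) : occurs x (inv p) ↔ occurs x p := by
  induction p <;> simp [inv, occurs, *] <;> tauto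

theorem WF_inv (p : Term) (h : WF p) : WF (inv p) := by
  induction p <;> simp_all [inv, WF, occurs_inv]

theorem AIter.snoc {p n σ ν τ} (h : AIter p n σ ν) (h2 : ABig p ν τ) :
    AIter p (n+1) σ τ := by
  induction n generalizing σ with
  | zero => cases h; exact AIter.step h2 (AIter.base _ _)
  | succ n ih => cases h with
    | step hb hrest => exact AIter.step hb (ih hrest)

theorem pres {p σ τ} (h : ABig p σ τ) :
    ∀ x, ¬ occurs x p → τ x = σ x := by
  refine ABig.rec (motive_1 := fun p σ τ _ => ∀ x, ¬ occurs x p → τ x = σ x)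
    (motive_2 := fun p _ σ τ _ => ∀ x, ¬ occurs x p → τ x = σ x)
    ?_ ?_ ?_ ?_ ?_ ?_ ?_ ?_ ?_ ?_ h
  · intro σ y _; rfl
  · intro x σ y hy; simp only [occurs] at hy; simp [upd, hy]
  · intro x σ y hy; simp only [occurs] at hy; simp [upd, hy]
  · intro x σ y hy; simp only [occurs] at hy; simp [upd, hy]
  · intro x σ h t _ y hy; simp only [occurs] at hy; simp [upd, hy]
  · intro p q σ ν τ _ _ ih1 ih2 y hy
    simp only [occurs] at hy; push_neg at hy
    rw [ih2 y hy.2, ih1 y hy.1]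
  · intro x p σ τ _ _ ih y hy
    simp only [occurs] at hy; push_neg at hy
    exact ih y hy.2
  · intro x p σ τ _ _ ih y hy
    simp only [occurs] at hy; push_neg at hy
    exact ih y ((occurs_inv y p).not.mpr hy.2)
  · intro p σ y _; rfl
  · intro p n σ ν τ _ _ ih1 ih2 y hy; rw [ih2 y hy, ih1 y hy]

theorem presIter {p n σ τ} (h : AIter p n σ τ) :
    ∀ x, ¬ occurs x p → τ x = σ x := by
  induction n generalizing σ with
  | zero => cases h; intros; rfl
  | succ n ih =>
    cases h with
    | step hb hrest => intro y hy; rw [ih hrest y hy, pres hb y hy]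

theorem rev {p σ τ} (h : ABig p σ τ) (hw : WF p) : ABig (inv p) τ σ := by
  refine ABig.rec (motive_1 := fun p σ τ _ => WF p → ABig (inv p) τ σ)
    (motive_2 := fun p n σ τ _ => WF p → AIter (inv p) n τ σ)
    ?_ ?_ ?_ ?_ ?_ ?_ ?_ ?_ ?_ ?_ h hw
  · intro σ _; exact ABig.skip σ
  · intro x σ _
    have e : upd (upd σ x ((σ x).1 + 1, (σ x).2)) x
        (((upd σ x ((σ x).1 + 1, (σ x).2)) x).1 - 1,
         ((upd σ x ((σ x).1 + 1, (σ x).2)) x).2) = σ := by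
      funext y; by_cases hy : y = x <;> simp [upd, hy]
    have hd := ABig.dec x (upd σ x ((σ x).1 + 1, (σ x).2)); rw [e] at hd; exact hd
  · intro x σ _
    have e : upd (upd σ x ((σ x).1 - 1, (σ x).2)) x
        (((upd σ x ((σ x).1 - 1, (σ x).2)) x).1 + 1,
         ((upd σ x ((σ x).1 - 1, (σ x).2)) x).2) = σ := by
      funext y; by_cases hy : y = x <;> simp [upd, hy]
    have hd := ABig.inc x (upd σ x ((σ x).1 - 1, (σ x).2)); rw [e] at hd; exact hd
  · intro x σ _
    have h0 : (upd σ x (0, (σ x).1 :: (σ x).2)) x = (0, (σ x).1 :: (σ x).2) := by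
      simp [upd]
    have e : upd (upd σ x (0, (σ x).1 :: (σ x).2)) x ((σ x).1, (σ x).2) = σ := by
      funext y; by_cases hy : y = x <;> simp [upd, hy]
    have hd := ABig.pop h0; rw [e] at hd; exact hd
  · intro x σ h t heq _
    have e : upd (upd σ x (h, t)) x
        (0, ((upd σ x (h, t)) x).1 :: ((upd σ x (h, t)) x).2) = σ := by
      funext y; by_cases hy : y = x <;> simp [upd, hy, heq]
    have hd := ABig.push x (upd σ x (h, t)); rw [e] at hd; exact hd
  · intro p q σ ν τ _ _ ih1 ih2 hw
    exact ABig.seq (ih2 hw.2) (ih1 hw.1)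
  · intro x p σ τ hge hit ih hw
    have hx : τ x = σ x := presIter hit x hw.1
    exact ABig.forFwd (hx ▸ hge) (by rw [hx]; exact ih hw.2)
  · intro x p σ τ hlt hit ih hw
    have hx : τ x = σ x := presIter hit x ((occurs_inv x p).not.mpr hw.1)
    have h2 := ih (WF_inv p hw.2)
    exact ABig.forBwd (x := x) (p := inv p) (hx ▸ hlt)
      (by rw [hx, invInv]; rw [invInv] at h2; exact h2)
  · intro p σ _; exact AIter.base _ _
  · intro p n σ ν τ _ _ ih1 ih2 hw
    exact (ih2 hw).snoc (ih1 hw)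

theorem asem_weakly_reversible (P : Term) (hP : WF P) (σ τ : AState) :
    ABig P σ τ ↔ ABig (inv P) τ σ := by
  constructor
  · exact fun h => rev h hP
  · intro h
    have := rev h (WF_inv P hP)
    rwa [invInv] at this
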